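/- Let A₁ be an n×n real symmetric matrix of block form [[0_s, P],[Pᵀ, 0_{n−s}]], let A₂ be an m×m real symmetric matrix, let D = diag(I_s, −I_{n−s}), and set 𝒜 = A₁⊗I_m + D⊗A₂ and 𝒜' = (A₁+D)⊗A₂. Let λ², μ² ≥ 0 be real numbers such that λ² is an eigenvalue of A₁² with multiplicity p and μ² is an eigenvalue of A₂² with multiplicity q. Then λ² + μ² is an eigenvalue of 𝒜² with multiplicity at least p·q, and (λ² + 1)·μ² is an eigenvalue of (𝒜')² with multiplicity at least p·q; that is, dim ker(𝒜² − (λ²+μ²)·I_{mn}) ≥ p·q and dim ker((𝒜')² − (λ²+1)μ²·I_{mn}) ≥ p·q. -/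

import Mathlib

open Matrix Kronecker
open scoped TensorProduct

private lemma kron_mulVec {α β : Type*} [Fintype α] [Fintype β]
    (A : Matrix α α ℝ) (B : Matrix β β ℝ) (x : α → ℝ) (y : β → ℝ) :
    (A ⊗ₖ B).mulVec (fun p => x p.1 * y p.2) = fun p => A.mulVec x p.1 * B.mulVec y p.2 := by
  funext ⟨i, j⟩
  simp only [Matrix.mulVec, dotProduct, kroneckerMap_apply, Fintype.sum_prod_type,
    Finset.sum_mul_sum]
  exact Finset.sum_congr rfl fun k _ => Finset.sum_congr rfl fun l _ => by ring

private noncomputable def vecTensorEquiv (α β : Type*) [Fintype α] [Fintype β] :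
    ((α → ℝ) ⊗[ℝ] (β → ℝ)) ≃ₗ[ℝ] (α × β → ℝ) :=
  (TensorProduct.congr (Finsupp.linearEquivFunOnFinite ℝ ℝ α).symm
      (Finsupp.linearEquivFunOnFinite ℝ ℝ β).symm).trans
    ((finsuppTensorFinsupp' ℝ α β).trans (Finsupp.linearEquivFunOnFinite ℝ ℝ (α × β)))

private lemma vecTensorEquiv_tmul {α β : Type*} [Fintype α] [Fintype β]
    (x : α → ℝ) (y : β → ℝ) :
    vecTensorEquiv α β (x ⊗ₜ[ℝ] y) = fun p => x p.1 * y p.2 := by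
  funext ⟨i, j⟩
  simp [vecTensorEquiv, finsuppTensorFinsupp'_apply_apply]

private lemma aux_finrank_mul_le {α β : Type*} [Fintype α] [Fintype β]
    (K₁ : Submodule ℝ (α → ℝ)) (K₂ : Submodule ℝ (β → ℝ))
    (M : Matrix (α × β) (α × β) ℝ)
    (h : ∀ x ∈ K₁, ∀ y ∈ K₂, M.mulVec (fun p => x p.1 * y p.2) = 0) :
    Module.finrank ℝ K₁ * Module.finrank ℝ K₂ ≤
      Module.finrank ℝ (LinearMap.ker M.mulVecLin) := by
  classical
  let g := vecTensorEquiv α β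
  let f : (K₁ ⊗[ℝ] K₂) →ₗ[ℝ] (α × β → ℝ) :=
    g.toLinearMap ∘ₗ TensorProduct.map K₁.subtype K₂.subtype
  have hinj : Function.Injective f := by
    apply g.injective.comp
    rw [← LinearMap.lTensor_comp_rTensor]
    exact (Module.Flat.lTensor_preserves_injective_linearMap _ K₂.injective_subtype).comp
      (Module.Flat.rTensor_preserves_injective_linearMap _ K₁.injective_subtype)
  have hrange : ∀ z, f z ∈ LinearMap.ker M.mulVecLin := by
    have hcomp : M.mulVecLin ∘ₗ f = 0 := by
      apply TensorProduct.ext'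
      intro x y
      simp only [LinearMap.comp_apply, LinearMap.zero_apply, f, LinearEquiv.coe_coe,
        TensorProduct.map_tmul, Submodule.coe_subtype, g]
      rw [vecTensorEquiv_tmul, Matrix.mulVecLin_apply]
      exact h x x.2 y y.2
    intro z
    rw [LinearMap.mem_ker]
    exact DFunLike.congr_fun hcomp z
  let f' : (K₁ ⊗[ℝ] K₂) →ₗ[ℝ] (LinearMap.ker M.mulVecLin) := f.codRestrict _ hrange
  have hinj' : Function.Injective f' := fun a b hab => hinj (congrArg Subtype.val hab)
  calc Module.finrank ℝ K₁ * Module.finrank ℝ K₂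
      = Module.finrank ℝ (K₁ ⊗[ℝ] K₂) := (Module.finrank_tensorProduct).symm
    _ ≤ _ := LinearMap.finrank_le_finrank_of_injective hinj'

theorem eigenvalue_of_squared_signed_products (s t m : ℕ)
    (P : Matrix (Fin s) (Fin t) ℝ)
    (A₂ : Matrix (Fin m) (Fin m) ℝ) (hA₂symm : A₂.IsSymm)
    (A₁ : Matrix (Fin s ⊕ Fin t) (Fin s ⊕ Fin t) ℝ)
    (hA₁ : A₁ = Matrix.fromBlocks 0 P Pᵀ 0)
    (D : Matrix (Fin s ⊕ Fin t) (Fin s ⊕ Fin t) ℝ)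
    (hD : D = Matrix.fromBlocks 1 0 0 (-1))
    (𝒜 𝒜' : Matrix ((Fin s ⊕ Fin t) × Fin m) ((Fin s ⊕ Fin t) × Fin m) ℝ)
    (h𝒜 : 𝒜 = A₁ ⊗ₖ (1 : Matrix (Fin m) (Fin m) ℝ) + D ⊗ₖ A₂)
    (h𝒜' : 𝒜' = (A₁ + D) ⊗ₖ A₂)
    (lam mu : ℝ) (p q : ℕ) (hp0 : 0 < p) (hq0 : 0 < q)
    (hp : Module.finrank ℝ (LinearMap.ker (A₁ ^ 2 - (lam ^ 2) •
      (1 : Matrix (Fin s ⊕ Fin t) (Fin s ⊕ Fin t) ℝ)).mulVecLin) = p)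
    (hq : Module.finrank ℝ (LinearMap.ker (A₂ ^ 2 - (mu ^ 2) •
      (1 : Matrix (Fin m) (Fin m) ℝ)).mulVecLin) = q) :
    p * q ≤ Module.finrank ℝ (LinearMap.ker (𝒜 ^ 2 - (lam ^ 2 + mu ^ 2) •
      (1 : Matrix ((Fin s ⊕ Fin t) × Fin m) ((Fin s ⊕ Fin t) × Fin m) ℝ)).mulVecLin) ∧
    p * q ≤ Module.finrank ℝ (LinearMap.ker (𝒜' ^ 2 - ((lam ^ 2 + 1) * mu ^ 2) •
      (1 : Matrix ((Fin s ⊕ Fin t) × Fin m) ((Fin s ⊕ Fin t) × Fin m) ℝ)).mulVecLin) := by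
  have hAD : A₁ * D = -(D * A₁) := by
    subst hA₁ hD
    ext (i | i) (j | j) <;>
      simp [Matrix.fromBlocks_multiply]
  have hDD : D * D = 1 := by
    subst hD
    ext (i | i) (j | j) <;>
      simp [Matrix.fromBlocks_multiply, Matrix.one_apply]
  have hneg : ∀ X : Matrix (Fin s ⊕ Fin t) (Fin s ⊕ Fin t) ℝ,
      (-X) ⊗ₖ A₂ = -(X ⊗ₖ A₂) := by
    intro X
    ext ⟨i, j⟩ ⟨k, l⟩
    simp [kroneckerMap_apply]
  have h2 : 𝒜 ^ 2 = (A₁ * A₁) ⊗ₖ (1 : Matrix (Fin m) (Fin m) ℝ) +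
      (1 : Matrix (Fin s ⊕ Fin t) (Fin s ⊕ Fin t) ℝ) ⊗ₖ (A₂ * A₂) := by
    rw [h𝒜, pow_two, add_mul, mul_add, mul_add]
    simp only [← Matrix.mul_kronecker_mul, Matrix.one_mul, Matrix.mul_one, hDD, hAD, hneg]
    abel
  have h2' : 𝒜' ^ 2 = (A₁ * A₁ + 1) ⊗ₖ (A₂ * A₂) := by
    rw [h𝒜', pow_two]
    simp only [← Matrix.mul_kronecker_mul]
    rw [add_mul, mul_add, mul_add, hDD, hAD,
      show A₁ * A₁ + -(D * A₁) + (D * A₁ + 1) = A₁ * A₁ + 1 from by abel]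
  set K₁ := LinearMap.ker (A₁ ^ 2 - (lam ^ 2) •
      (1 : Matrix (Fin s ⊕ Fin t) (Fin s ⊕ Fin t) ℝ)).mulVecLin with hK₁
  set K₂ := LinearMap.ker (A₂ ^ 2 - (mu ^ 2) •
      (1 : Matrix (Fin m) (Fin m) ℝ)).mulVecLin with hK₂
  have mem1 : ∀ x ∈ K₁, (A₁ * A₁).mulVec x = lam ^ 2 • x := by
    intro x hx
    rw [hK₁, LinearMap.mem_ker, Matrix.mulVecLin_apply, Matrix.sub_mulVec,
      Matrix.smul_mulVec, Matrix.one_mulVec, sub_eq_zero, pow_two] at hx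
    exact hx
  have mem2 : ∀ y ∈ K₂, (A₂ * A₂).mulVec y = mu ^ 2 • y := by
    intro y hy
    rw [hK₂, LinearMap.mem_ker, Matrix.mulVecLin_apply, Matrix.sub_mulVec,
      Matrix.smul_mulVec, Matrix.one_mulVec, sub_eq_zero, pow_two] at hy
    exact hy
  constructor
  · have := aux_finrank_mul_le K₁ K₂
      (𝒜 ^ 2 - (lam ^ 2 + mu ^ 2) • 1)
      (by
        intro x hx y hy
        rw [Matrix.sub_mulVec, Matrix.smul_mulVec, Matrix.one_mulVec, h2,
          Matrix.add_mulVec, kron_mulVec, kron_mulVec, mem1 x hx, mem2 y hy,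
          Matrix.one_mulVec, Matrix.one_mulVec, sub_eq_zero]
        funext pr
        simp only [Pi.add_apply, Pi.smul_apply, smul_eq_mul]
        ring)
    rwa [hp, hq] at this
  · have := aux_finrank_mul_le K₁ K₂
      (𝒜' ^ 2 - ((lam ^ 2 + 1) * mu ^ 2) • 1)
      (by
        intro x hx y hy
        rw [Matrix.sub_mulVec, Matrix.smul_mulVec, Matrix.one_mulVec, h2',
          kron_mulVec, Matrix.add_mulVec, mem1 x hx, Matrix.one_mulVec, mem2 y hy,
          sub_eq_zero]
        funext pr
        simp only [Pi.add_apply, Pi.smul_apply, smul_eq_mul]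
        ring)
    rwa [hp, hq] at this
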